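/- Let ν₁ and ν₂ be Borel probability measures on ℝ whose supports are bounded from above, let ε ∈ (0,1), and let ν = ε·ν₁ + (1−ε)·ν₂. Then max_{t∈[0,1]} P(ν)(t) ≥ ε · max_{t∈[0,1]} P(ν₁)(t). -/

import Mathlib

open MeasureTheory Set Filter Topology

/-- `F_ν*(t) = sup { x | ν((x,∞)) > t }`. -/
noncomputable def Fstar (ν : Measure ℝ) (t : ℝ) : ℝ :=
  sSup {x : ℝ | t < (ν (Ioi x)).toReal}

/-- `P(ν)(t) = ∫₀ᵗ F_ν*(s) ds`. -/
noncomputable def Pfun (ν : Measure ℝ) (t : ℝ) : ℝ :=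
  ∫ s in Ioc (0:ℝ) t, Fstar ν s

/-- The maximal value of the polygon `P(ν)` over `[0,1]`
    (taken as the supremum over `t ∈ [0,1)`). -/
noncomputable def Pmax (ν : Measure ℝ) : ℝ :=
  ⨆ t ∈ Ico (0:ℝ) 1, Pfun ν t

lemma Fstar_bddAbove {μ : Measure ℝ} {M t : ℝ} (hM : μ (Ioi M) = 0) (ht : 0 ≤ t) :
    BddAbove {x : ℝ | t < (μ (Ioi x)).toReal} := by
  refine ⟨M, fun x hx => ?_⟩
  by_contra h
  push_neg at h
  have hx0 : μ (Ioi x) = 0 := measure_mono_null (Ioi_subset_Ioi h.le) hM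
  simp only [mem_setOf_eq, hx0, ENNReal.toReal_zero] at hx
  linarith

lemma Fstar_nonempty {μ : Measure ℝ} [IsProbabilityMeasure μ] {t : ℝ} (ht : t < 1) :
    {x : ℝ | t < (μ (Ioi x)).toReal}.Nonempty := by
  have hmono : Monotone (fun n : ℕ => Ioi (-(n:ℝ))) := by
    intro n m h
    exact Ioi_subset_Ioi (by exact_mod_cast neg_le_neg (Nat.cast_le.2 h))
  have hU : (⋃ n : ℕ, Ioi (-(n:ℝ))) = univ := by
    ext x
    simp only [mem_iUnion, mem_Ioi, mem_univ, iff_true]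
    obtain ⟨n, hn⟩ := exists_nat_gt (-x)
    exact ⟨n, by linarith⟩
  have h1 := tendsto_measure_iUnion_atTop (μ := μ) hmono
  rw [hU, measure_univ] at h1
  have h2 : Tendsto (fun n : ℕ => (μ (Ioi (-(n:ℝ)))).toReal) atTop (𝓝 1) := by
    have := (ENNReal.tendsto_toReal (a := 1) (by simp)).comp h1
    simpa [Function.comp_def] using this
  obtain ⟨n, hn⟩ := (h2.eventually (eventually_gt_nhds ht)).exists
  exact ⟨-(n:ℝ), hn⟩

lemma Fstar_anti {μ : Measure ℝ} [IsProbabilityMeasure μ] {M : ℝ} (hM : μ (Ioi M) = 0) :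
    AntitoneOn (Fstar μ) (Ico 0 1) := by
  intro s hs t ht hst
  exact csSup_le_csSup (Fstar_bddAbove hM hs.1) (Fstar_nonempty ht.2)
    (fun x hx => lt_of_le_of_lt hst hx)

lemma Fstar_integrableOn {μ : Measure ℝ} [IsProbabilityMeasure μ] {M : ℝ}
    (hM : μ (Ioi M) = 0) {t : ℝ} (ht0 : 0 ≤ t) (ht1 : t < 1) :
    IntegrableOn (Fstar μ) (Ioc 0 t) := by
  have hsub : Icc (0:ℝ) t ⊆ Ico 0 1 := fun x hx => ⟨hx.1, lt_of_le_of_lt hx.2 ht1⟩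
  have := AntitoneOn.integrableOn_isCompact (μ := volume) isCompact_Icc
    ((Fstar_anti hM).mono hsub)
  exact this.mono_set Ioc_subset_Icc_self

theorem stmt0 (ν₁ ν₂ : Measure ℝ) [IsProbabilityMeasure ν₁] [IsProbabilityMeasure ν₂]
    (h₁ : ∃ M : ℝ, ν₁ (Ioi M) = 0) (h₂ : ∃ M : ℝ, ν₂ (Ioi M) = 0)
    (ε : ℝ) (hε : ε ∈ Ioo (0:ℝ) 1)
    (ν : Measure ℝ)
    (hν : ν = ENNReal.ofReal ε • ν₁ + ENNReal.ofReal (1 - ε) • ν₂) :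
    ε * Pmax ν₁ ≤ Pmax ν := by
  obtain ⟨M₁, hM₁⟩ := h₁
  obtain ⟨M₂, hM₂⟩ := h₂
  obtain ⟨hε0, hε1⟩ := hε
  have hprob : IsProbabilityMeasure ν := by
    constructor
    rw [hν]
    simp only [Measure.add_apply, Measure.smul_apply, smul_eq_mul, measure_univ, mul_one]
    rw [← ENNReal.ofReal_add hε0.le (by linarith)]
    norm_num
  set M := max M₁ M₂ with hMdef
  have e1 : ν₁ (Ioi M) = 0 := measure_mono_null (Ioi_subset_Ioi (le_max_left _ _)) hM₁
  have e2 : ν₂ (Ioi M) = 0 := measure_mono_null (Ioi_subset_Ioi (le_max_right _ _)) hM₂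
  have hMν : ν (Ioi M) = 0 := by
    rw [hν]
    simp [e1, e2]
  -- pointwise comparison
  have key : ∀ s : ℝ, 0 ≤ s → s < 1 → Fstar ν₁ s ≤ Fstar ν (ε * s) := by
    intro s hs0 hs1
    refine csSup_le_csSup (Fstar_bddAbove hMν (mul_nonneg hε0.le hs0))
      (Fstar_nonempty hs1) ?_
    intro x hx
    simp only [mem_setOf_eq] at hx ⊢
    have ha : ν₁ (Ioi x) ≠ ⊤ := (measure_lt_top _ _).ne
    have hb : ν₂ (Ioi x) ≠ ⊤ := (measure_lt_top _ _).ne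
    have : (ν (Ioi x)).toReal = ε * (ν₁ (Ioi x)).toReal + (1 - ε) * (ν₂ (Ioi x)).toReal := by
      rw [hν]
      simp only [Measure.add_apply, Measure.smul_apply, smul_eq_mul]
      rw [ENNReal.toReal_add (by finiteness) (by finiteness), ENNReal.toReal_mul,
        ENNReal.toReal_mul, ENNReal.toReal_ofReal hε0.le,
        ENNReal.toReal_ofReal (by linarith)]
    rw [this]
    have hb0 : 0 ≤ (ν₂ (Ioi x)).toReal := ENNReal.toReal_nonneg
    nlinarith
  -- integral comparison
  have key2 : ∀ t : ℝ, 0 ≤ t → t < 1 → ε * Pfun ν₁ t ≤ Pfun ν (ε * t) := by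
    intro t ht0 ht1
    have hεt0 : 0 ≤ ε * t := mul_nonneg hε0.le ht0
    have hI1 : Pfun ν₁ t = ∫ s in (0:ℝ)..t, Fstar ν₁ s :=
      (intervalIntegral.integral_of_le ht0).symm
    have hI2 : Pfun ν (ε * t) = ∫ s in (0:ℝ)..(ε * t), Fstar ν s :=
      (intervalIntegral.integral_of_le hεt0).symm
    have hcv := intervalIntegral.smul_integral_comp_mul_left (a := 0) (b := t) (Fstar ν) ε
    rw [mul_zero] at hcv
    rw [hI1, hI2, ← hcv]
    simp only [smul_eq_mul]
    have hanti2 : AntitoneOn (fun x => Fstar ν (ε * x)) (Icc 0 t) := by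
      intro a ha b hb hab
      refine Fstar_anti hMν ⟨mul_nonneg hε0.le ha.1, ?_⟩ ⟨mul_nonneg hε0.le hb.1, ?_⟩
        (mul_le_mul_of_nonneg_left hab hε0.le)
      · nlinarith [ha.2, hb.2]
      · nlinarith [hb.2]
    have hint2 : IntegrableOn (fun x => Fstar ν (ε * x)) (Ioc 0 t) :=
      (AntitoneOn.integrableOn_isCompact (μ := volume) isCompact_Icc hanti2).mono_set
        Ioc_subset_Icc_self
    have hint1 : IntegrableOn (Fstar ν₁) (Ioc 0 t) := Fstar_integrableOn hM₁ ht0 ht1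
    refine mul_le_mul_of_nonneg_left ?_ hε0.le
    refine intervalIntegral.integral_mono_on ht0
      ((intervalIntegrable_iff_integrableOn_Ioc_of_le ht0).mpr hint1)
      ((intervalIntegrable_iff_integrableOn_Ioc_of_le ht0).mpr hint2) ?_
    intro x hx
    exact key x hx.1 (lt_of_le_of_lt hx.2 ht1)
  -- boundedness of Pfun ν on [0,1)
  set B := max 0 (Fstar ν 0) with hBdef
  have hB0 : 0 ≤ B := le_max_left _ _
  have hbound : ∀ t : ℝ, 0 ≤ t → t < 1 → Pfun ν t ≤ B := by
    intro t ht0 ht1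
    have hint : IntegrableOn (Fstar ν) (Ioc 0 t) := Fstar_integrableOn hMν ht0 ht1
    have h1 : Pfun ν t ≤ ∫ _ in Ioc (0:ℝ) t, B := by
      refine setIntegral_mono_on hint (by simp) measurableSet_Ioc ?_
      intro x hx
      have := Fstar_anti hMν (left_mem_Ico.mpr one_pos)
        ⟨hx.1.le, lt_of_le_of_lt hx.2 ht1⟩ hx.1.le
      exact le_trans this (le_max_right _ _)
    have h2 : ∫ _ in Ioc (0:ℝ) t, B = t * B := by
      rw [setIntegral_const, Measure.real_def, Real.volume_Ioc, smul_eq_mul]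
      rw [ENNReal.toReal_ofReal (by linarith)]
      ring
    rw [h2] at h1
    nlinarith
  have hBdd : BddAbove (range fun t : ℝ => ⨆ _ : t ∈ Ico (0:ℝ) 1, Pfun ν t) := by
    refine ⟨B, ?_⟩
    rintro x ⟨t, rfl⟩
    dsimp only
    by_cases h : t ∈ Ico (0:ℝ) 1
    · rw [ciSup_pos h]
      exact hbound t h.1 h.2
    · haveI : IsEmpty (t ∈ Ico (0:ℝ) 1) := ⟨h⟩
      rw [Real.iSup_of_isEmpty]
      exact hB0
  have hle : ∀ t : ℝ, 0 ≤ t → t < 1 → Pfun ν t ≤ Pmax ν := by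
    intro t ht0 ht1
    refine le_ciSup_of_le hBdd t ?_
    exact (ciSup_pos (p := t ∈ Ico (0:ℝ) 1) (f := fun _ => Pfun ν t) ⟨ht0, ht1⟩).ge
  have hPν0 : 0 ≤ Pmax ν := by
    have h0 : Pfun ν 0 = 0 := by simp [Pfun]
    have := hle 0 le_rfl one_pos
    linarith
  -- conclude
  have hfinal : Pmax ν₁ ≤ Pmax ν / ε := by
    refine ciSup_le fun t => ?_
    by_cases h : t ∈ Ico (0:ℝ) 1
    · rw [ciSup_pos (p := t ∈ Ico (0:ℝ) 1) (f := fun _ => Pfun ν₁ t) h]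
      rw [le_div_iff₀ hε0]
      have h1 := key2 t h.1 h.2
      have h2 : Pfun ν (ε * t) ≤ Pmax ν :=
        hle (ε * t) (mul_nonneg hε0.le h.1) (by nlinarith [h.1, h.2])
      linarith
    · haveI : IsEmpty (t ∈ Ico (0:ℝ) 1) := ⟨h⟩
      rw [Real.iSup_of_isEmpty]
      positivity
  calc ε * Pmax ν₁ ≤ ε * (Pmax ν / ε) := mul_le_mul_of_nonneg_left hfinal hε0.le
    _ = Pmax ν := by field_simp
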